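/- A symmetric bijection between subsets of α has small symmetric difference from the identity: if X, Y ⊆ α, f : X → Y is a bijection, and (S, T) is a pair consisting of a small set S of elements of α and a small set T of pairwise disjoint near-litters such that every ρ ∈ G fixing every element of S and fixing every near-litter in T setwise satisfies ρ '' X = X and f(ρ(x)) = ρ(f(x)) for all x ∈ X, then the set {x ∈ X : f(x) ≠ x} is small. -/

import Mathlib

open Cardinal Set

universe u

namespace NFPaper

variable {α : Type u}

/-- A set is small if its cardinality is less than `κ`. -/
def SmallSet (κ : Cardinal.{u}) {β : Type u} (s : Set β) : Prop := #s < κ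

/-- A near-litter: a subset of `α` whose symmetric difference with some litter
(member of the litter partition `ℒ`) is small. -/
def IsNearLitter (κ : Cardinal.{u}) (ℒ : Set (Set α)) (N : Set α) : Prop :=
  ∃ L ∈ ℒ, SmallSet κ (symmDiff N L)

/-- Membership in the group `G` of all permutations of `α` under which the image of
every litter is a near-litter. -/
def Allowable (κ : Cardinal.{u}) (ℒ : Set (Set α)) (ρ : Equiv.Perm α) : Prop :=
  ∀ L ∈ ℒ, IsNearLitter κ ℒ (ρ '' L)

/-- A symmetric bijection between subsets of `α` has small symmetric difference from
the identity: if `f` maps `X` bijectively onto `Y`, and `(S, T)` is a pair consisting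
of a small set `S` of elements of `α` and a small set `T` of pairwise disjoint
near-litters such that every allowable permutation `ρ` fixing every element of `S` and
every near-litter in `T` setwise satisfies `ρ '' X = X` and `f (ρ x) = ρ (f x)` for
all `x ∈ X`, then `{x ∈ X | f x ≠ x}` is small. -/
theorem symmetric_bijection_near_identity
    (κ : Cardinal.{u}) (hreg : κ.IsRegular) (hunc : ℵ₀ < κ)
    (α : Type u) (ℒ : Set (Set α)) (hpart : Setoid.IsPartition ℒ)
    (hsize : ∀ L ∈ ℒ, #L = κ)
    (X Y : Set α) (f : α → α) (hf : Set.BijOn f X Y)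
    (S : Set α) (T : Set (Set α))
    (hS : SmallSet κ S) (hT : ∀ N ∈ T, IsNearLitter κ ℒ N)
    (hTdisj : T.Pairwise Disjoint) (hTsmall : SmallSet κ T)
    (hsupp : ∀ ρ : Equiv.Perm α, Allowable κ ℒ ρ →
      (∀ a ∈ S, ρ a = a) → (∀ N ∈ T, ρ '' N = N) →
      ρ '' X = X ∧ ∀ x ∈ X, f (ρ x) = ρ (f x)) :
    SmallSet κ {x | x ∈ X ∧ f x ≠ x} := by
  classical
  set B := {x | x ∈ X ∧ f x ≠ x} with hBdef
  by_contra hB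
  rw [SmallSet, not_lt] at hB
  -- Key step: two distinct points of X, outside S, with the same pattern of
  -- membership in the near-litters of T, such that f a ∉ {a, b}, give a contradiction.
  have hkey : ∀ a b : α, a ≠ b → a ∈ X → b ∈ X → a ∉ S → b ∉ S →
      (∀ N ∈ T, a ∈ N ↔ b ∈ N) → f a ≠ a → f a ≠ b → False := by
    intro a b hab haX hbX haS hbS hpat hfa hfab
    set σ := Equiv.swap a b with hσ
    have hσval : ∀ x : α, x ≠ a → x ≠ b → σ x = x := fun x hx1 hx2 =>
      Equiv.swap_apply_of_ne_of_ne hx1 hx2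
    have himg : ∀ N : Set α, (a ∈ N ↔ b ∈ N) → σ '' N = N := by
      intro N hN
      ext x
      rw [Set.mem_image_equiv, hσ, Equiv.symm_swap]
      rcases eq_or_ne x a with rfl | hxa
      · rw [Equiv.swap_apply_left]; exact hN.symm
      rcases eq_or_ne x b with rfl | hxb
      · rw [Equiv.swap_apply_right]; exact hN
      · rw [hσval x hxa hxb]
    have hallow : Allowable κ ℒ σ := by
      intro L hL
      refine ⟨L, hL, ?_⟩
      have hsub : symmDiff (σ '' L) L ⊆ {a, b} := by
        intro x hx
        by_contra hxab
        obtain ⟨hxa, hxb⟩ : x ≠ a ∧ x ≠ b := by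
          constructor <;> intro h <;> apply hxab <;> simp [h]
        have hiff : x ∈ σ '' L ↔ x ∈ L := by
          rw [Set.mem_image_equiv, hσ, Equiv.symm_swap, hσval x hxa hxb]
        rcases hx with ⟨h1, h2⟩ | ⟨h1, h2⟩
        · exact h2 (hiff.mp h1)
        · exact h2 (hiff.mpr h1)
      have hfin : (symmDiff (σ '' L) L).Finite :=
        (Set.toFinite ({a, b} : Set α)).subset hsub
      exact hfin.lt_aleph0.trans hunc
    have hfixS : ∀ x ∈ S, σ x = x := fun x hx =>
      hσval x (fun h => haS (h ▸ hx)) (fun h => hbS (h ▸ hx))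
    have hfixT : ∀ N ∈ T, σ '' N = N := fun N hN => himg N (hpat N hN)
    obtain ⟨-, hcomm⟩ := hsupp σ hallow hfixS hfixT
    have h1 := hcomm a haX
    rw [hσ] at h1
    rw [Equiv.swap_apply_left, Equiv.swap_apply_of_ne_of_ne hfa hfab] at h1
    exact hab (hf.injOn hbX haX h1).symm
  -- From any subset F of B \ S of cardinality ≥ κ whose elements share the same
  -- pattern of membership in the near-litters of T, derive a contradiction.
  have hF : ∀ F : Set α, κ ≤ #F → F ⊆ B \ S →
      (∀ N ∈ T, ∀ x ∈ F, ∀ y ∈ F, (x ∈ N ↔ y ∈ N)) → False := by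
    intro F hκF hFsub hFpat
    have hFinf : F.Infinite := by
      rw [← Set.infinite_coe_iff, Cardinal.infinite_iff]
      exact hunc.le.trans hκF
    obtain ⟨a, haF⟩ := hFinf.nonempty
    obtain ⟨b, hbF⟩ := (hFinf.diff (Set.toFinite ({a, f a} : Set α))).nonempty
    obtain ⟨hbF, hb2⟩ := hbF
    have hba : b ≠ a := fun h => hb2 (by simp [h])
    have hbfa : b ≠ f a := fun h => hb2 (by simp [h])
    have haB := hFsub haF
    have hbB := hFsub hbF
    exact hkey a b hba.symm haB.1.1 hbB.1.1 haB.2 hbB.2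
      (fun N hN => hFpat N hN a haF b hbF) haB.1.2 (Ne.symm hbfa)
  -- Now find such an F by a pigeonhole argument.
  have hC : κ ≤ #(B \ S : Set α) := by
    by_contra hC
    push_neg at hC
    have h1 : B ⊆ (B \ S) ∪ S := fun x hx => by
      by_cases hxS : x ∈ S
      · exact Or.inr hxS
      · exact Or.inl ⟨hx, hxS⟩
    have : #B < κ :=
      lt_of_le_of_lt ((Cardinal.mk_le_mk_of_subset h1).trans (Cardinal.mk_union_le _ _))
        (Cardinal.add_lt_of_lt hreg.aleph0_le hC hS)
    exact absurd hB this.not_ge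
  by_cases hD : κ ≤ #((B \ S) \ ⋃₀ T : Set α)
  · -- many points outside all near-litters of T
    refine hF _ hD Set.diff_subset ?_
    intro N hN x hx y hy
    constructor <;> intro h
    · exact absurd ⟨N, hN, h⟩ hx.2
    · exact absurd ⟨N, hN, h⟩ hy.2
  · -- many points inside the near-litters of T; find a single near-litter with many
    push_neg at hD
    have hE : κ ≤ #((B \ S) ∩ ⋃₀ T : Set α) := by
      by_contra hE
      push_neg at hE
      have h1 : B \ S ⊆ ((B \ S) \ ⋃₀ T) ∪ ((B \ S) ∩ ⋃₀ T) := fun x hx => by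
        by_cases hxT : x ∈ ⋃₀ T
        · exact Or.inr ⟨hx, hxT⟩
        · exact Or.inl ⟨hx, hxT⟩
      have : #(B \ S : Set α) < κ :=
        lt_of_le_of_lt ((Cardinal.mk_le_mk_of_subset h1).trans (Cardinal.mk_union_le _ _))
          (Cardinal.add_lt_of_lt hreg.aleph0_le hD hE)
      exact absurd hC this.not_ge
    have heq : ((B \ S) ∩ ⋃₀ T : Set α) = ⋃ N : T, ((B \ S) ∩ (N : Set α)) := by
      rw [Set.sUnion_eq_iUnion, Set.inter_iUnion]
    obtain ⟨N₀, hκN₀⟩ : ∃ N : T, κ ≤ #((B \ S) ∩ (N : Set α) : Set α) := by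
      by_contra hall
      push_neg at hall
      have : #((B \ S) ∩ ⋃₀ T : Set α) < κ := by
        rw [heq]
        exact lt_of_le_of_lt Cardinal.mk_iUnion_le_sum_mk
          (Cardinal.sum_lt_of_isRegular hreg hTsmall hall)
      exact absurd hE this.not_ge
    refine hF _ hκN₀ Set.inter_subset_left ?_
    intro N hN x hx y hy
    rcases eq_or_ne N (N₀ : Set α) with rfl | hne
    · exact ⟨fun _ => hy.2, fun _ => hx.2⟩
    · have hdisj := hTdisj hN N₀.2 hne
      constructor <;> intro h
      · exact absurd hx.2 (Set.disjoint_left.mp hdisj h)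
      · exact absurd hy.2 (Set.disjoint_left.mp hdisj h)

end NFPaper
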